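/- Let (A, Con, ⊢, Δ) be an information system with witnesses and z a state. Then the family A_z = {[X]_i : (i,X) ∈ Con, {i} ∪ X ⊆ z} is directed (under inclusion) and its union equals z, where [X]_i = {a : (i,X) ⊢ a}. -/
import Mathlib


variable {A : Type*}

/-- An information system with witnesses `(A, Con, ⊢, Δ)`. -/
structure IsISW (Δ : A) (Con : A → Finset A → Prop)
    (ent : A → Finset A → A → Prop) : Prop where
  dom : ∀ i X a, ent i X a → Con i X
  ax1 : ∀ i, Con i {i}
  ax2 : ∀ i (X Y : Finset A), Y ⊆ X → Con i X → Con i Y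
  ax3 : ∀ i, ent i ∅ Δ
  ax4 : ∀ i (X Y : Finset A), Con i X → (∀ b ∈ Y, ent i X b) → Con i Y
  ax5 : ∀ i (X Y : Finset A) (a : A), Con i X → Con i Y → X ⊆ Y → ent i X a → ent i Y a
  ax6 : ∀ i (X Y : Finset A) (a : A), Con i X → (∀ b ∈ Y, ent i X b) → ent i Y a → ent i X a
  ax7 : ∀ i j : A, Con j {i} → ∀ X, Con i X → Con j X
  ax8 : ∀ (i j : A) (X : Finset A) (a : A), Con j {i} → Con i X → ent i X a → ent j X a
  ax9 : ∀ (i j : A) (X : Finset A) (a : A), Con j {i} → Con i X → ent j X a → ent i X a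
  ax10 : ∀ i (X Y : Finset A), Con i X → (∀ b ∈ Y, ent i X b) →
      ∃ e Z, Con e Z ∧ ent i X e ∧ (∀ b ∈ Z, ent i X b) ∧ (∀ b ∈ Y, ent e Z b)

/-- A state of an information system with witnesses: finitely consistent with a
witness in the state (ST1), entailment-closed (ST2), every element derivable (ST3). -/
def IsState (Con : A → Finset A → Prop) (ent : A → Finset A → A → Prop)
    (x : Set A) : Prop :=
  (∀ F : Finset A, ↑F ⊆ x → ∃ i ∈ x, Con i F) ∧
  (∀ i ∈ x, ∀ X : Finset A, ↑X ⊆ x → Con i X → ∀ a, ent i X a → a ∈ x) ∧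
  (∀ a ∈ x, ∃ i ∈ x, ∃ X : Finset A, ↑X ⊆ x ∧ Con i X ∧ ent i X a)

theorem stmt8 {Δ : A} {Con : A → Finset A → Prop} {ent : A → Finset A → A → Prop}
    (h : IsISW Δ Con ent) (z : Set A) (hz : IsState Con ent z) :
    ((setOf fun s : Set A =>
        ∃ (i : A) (X : Finset A), Con i X ∧ i ∈ z ∧ ↑X ⊆ z ∧
          s = {a : A | ent i X a}).Nonempty ∧
     DirectedOn (· ⊆ ·)
       (setOf fun s : Set A =>
        ∃ (i : A) (X : Finset A), Con i X ∧ i ∈ z ∧ ↑X ⊆ z ∧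
          s = {a : A | ent i X a})) ∧
    ⋃₀ (setOf fun s : Set A =>
        ∃ (i : A) (X : Finset A), Con i X ∧ i ∈ z ∧ ↑X ⊆ z ∧
          s = {a : A | ent i X a}) = z := by
  classical
  obtain ⟨st1, st2, st3⟩ := hz
  refine ⟨⟨?_, ?_⟩, ?_⟩
  · obtain ⟨i, hi, hci⟩ := st1 ∅ (by simp)
    exact ⟨{a | ent i ∅ a}, i, ∅, hci, hi, by simp, rfl⟩
  · rintro s ⟨i, X, hciX, hiz, hXz, rfl⟩ t ⟨j, Y, hcjY, hjz, hYz, rfl⟩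
    set Z : Finset A := insert i (insert j (X ∪ Y)) with hZ
    have hZz : ↑Z ⊆ z := by
      intro a ha
      simp only [hZ, Finset.coe_insert, Finset.coe_union, Set.mem_insert_iff,
        Set.mem_union] at ha
      rcases ha with rfl | rfl | ha | ha
      · exact hiz
      · exact hjz
      · exact hXz ha
      · exact hYz ha
    obtain ⟨k, hkz, hckZ⟩ := st1 Z hZz
    have hki : Con k {i} := h.ax2 k Z {i} (by simp [hZ]) hckZ
    have hkj : Con k {j} := h.ax2 k Z {j} (by simp [hZ]) hckZ
    refine ⟨{a | ent k Z a}, ⟨k, Z, hckZ, hkz, hZz, rfl⟩, ?_, ?_⟩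
    · intro a ha
      have : ent k X a := h.ax8 i k X a hki hciX ha
      exact h.ax5 k X Z a (h.ax7 i k hki X hciX) hckZ
        (by intro b hb; simp [hZ, Finset.mem_union.mpr (Or.inl hb)]) this
    · intro a ha
      have : ent k Y a := h.ax8 j k Y a hkj hcjY ha
      exact h.ax5 k Y Z a (h.ax7 j k hkj Y hcjY) hckZ
        (by intro b hb; simp [hZ, Finset.mem_union.mpr (Or.inr hb)]) this
  · ext a
    constructor
    · rintro ⟨s, ⟨i, X, hc, hi, hX, rfl⟩, ha⟩
      exact st2 i hi X hX hc a ha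
    · intro ha
      obtain ⟨i, hi, X, hX, hc, he⟩ := st3 a ha
      exact ⟨{b | ent i X b}, ⟨i, X, hc, hi, hX, rfl⟩, he⟩
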